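/- Let v be a vertex with label ℓ(v) = (v_1, ..., v_t) in a DAG with ranked set L and injective ranking r. Then every vertex u ∈ D(v_t, v) \ {v_t} = (S(v_t) ∩ P(v)) \ {v_t} is unranked (u ∉ L). Moreover D(v_t, v) is exactly the set of vertices u that can reach v and satisfy ℓ(u) = ℓ(v), together with v_t itself. -/
import Mathlib


open Classical Finset
open scoped Classical
set_option linter.unusedSectionVars false
set_option maxHeartbeats 800000

noncomputable section

variable {V : Type*}

/-- Reachability: `reach adj u v` iff there is a directed path from `u` to `v`
(including the trivial path, so `reach adj v v` always holds). -/
def reach (adj : V → V → Prop) : V → V → Prop := Relation.ReflTransGen adj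

/-- The graph has no (nontrivial) directed cycle. -/
def IsAcyclic (adj : V → V → Prop) : Prop := ∀ x, ¬ Relation.TransGen adj x x

/-- `P(v)`: the set of predecessors of `v` (vertices with a path to `v`, including `v`). -/
def predSet [Fintype V] (adj : V → V → Prop) (v : V) : Finset V :=
  Finset.univ.filter fun u => reach adj u v

/-- `S(v)`: the set of successors of `v` (vertices reachable from `v`, including `v`). -/
def succSet [Fintype V] (adj : V → V → Prop) (v : V) : Finset V :=
  Finset.univ.filter fun u => reach adj v u

/-- The element of `A` of minimum rank (an arbitrary vertex if `A = ∅`). -/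
def argminR [Nonempty V] (r : V → ℕ∞) (A : Finset V) : V :=
  if h : A.Nonempty then (Finset.exists_min_image A r h).choose else Classical.arbitrary V

/-- The sets `A_{i+1}(v)` (0-indexed: `Aset adj L r v i` is the paper's `A_{i+1}(v)`):
`A_1(v) = P(v) ∩ L`, and `A_{i+1}(v) = (S(ℓ_i(v)) ∩ P(v) ∩ L) \ {ℓ_i(v)}` where
`ℓ_i(v)` is the minimum-rank element of `A_i(v)`. -/
def Aset [Fintype V] [Nonempty V] (adj : V → V → Prop) (L : Finset V) (r : V → ℕ∞)
    (v : V) : ℕ → Finset V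
  | 0 => predSet adj v ∩ L
  | i + 1 =>
    if (Aset adj L r v i).Nonempty then
      (succSet adj (argminR r (Aset adj L r v i)) ∩ predSet adj v ∩ L).erase
        (argminR r (Aset adj L r v i))
    else ∅

/-- `ℓ_{i+1}(v)` (0-indexed). -/
def labVertex [Fintype V] [Nonempty V] (adj : V → V → Prop) (L : Finset V) (r : V → ℕ∞)
    (v : V) (i : ℕ) : V := argminR r (Aset adj L r v i)

/-- `k(v)`: the number of indices `i` with `A_{i+1}(v) ≠ ∅` (in a DAG the sets shrink,
so this is the largest `i` with `A_i(v) ≠ ∅`, in the paper's 1-indexed convention). -/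
def kOf [Fintype V] [Nonempty V] (adj : V → V → Prop) (L : Finset V) (r : V → ℕ∞) (v : V) : ℕ :=
  ((Finset.range (Fintype.card V + 1)).filter fun i => (Aset adj L r v i).Nonempty).card

/-- The label `ℓ(v) = (ℓ_1(v), …, ℓ_{k(v)}(v))`. -/
def labelSeq [Fintype V] [Nonempty V] (adj : V → V → Prop) (L : Finset V) (r : V → ℕ∞)
    (v : V) : List V :=
  (List.range (kOf adj L r v)).map (labVertex adj L r v)

/-- The rank sequence `r(ℓ(v))` with `+∞` appended. -/
def rankSeq [Fintype V] [Nonempty V] (adj : V → V → Prop) (L : Finset V) (r : V → ℕ∞)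
    (v : V) : List ℕ∞ :=
  ((labelSeq adj L r v).map r) ++ [⊤]

/-- `ℓ(u) ≺ ℓ(v)`: decreasing lexicographic order on the rank sequences with `+∞` appended. -/
def labLt [Fintype V] [Nonempty V] (adj : V → V → Prop) (L : Finset V) (r : V → ℕ∞)
    (u v : V) : Prop :=
  List.Lex (· < ·) (rankSeq adj L r v) (rankSeq adj L r u)


section Aux
variable [Fintype V] [Nonempty V] {adj : V → V → Prop} {L : Finset V} {r : V → ℕ∞}

lemma argminR_mem {A : Finset V} (h : A.Nonempty) : argminR r A ∈ A := by
  rw [argminR, dif_pos h]; exact (Finset.exists_min_image A r h).choose_spec.1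

lemma argminR_min {A : Finset V} (h : A.Nonempty) {b : V} (hb : b ∈ A) :
    r (argminR r A) ≤ r b := by
  rw [argminR, dif_pos h]; exact (Finset.exists_min_image A r h).choose_spec.2 b hb

lemma mem_predSet {u v : V} : u ∈ predSet adj v ↔ reach adj u v := by simp [predSet]
lemma mem_succSet {u v : V} : u ∈ succSet adj v ↔ reach adj v u := by simp [succSet]

lemma reach_antisymm (hacyc : IsAcyclic adj) {a b : V} (hab : reach adj a b)
    (hba : reach adj b a) : a = b := by
  by_contra hne
  rcases (Relation.reflTransGen_iff_eq_or_transGen.mp hab) with h | h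
  · exact hne h.symm
  · exact hacyc a (h.trans_left hba)

lemma argminR_eq_of_subset (hinj : Set.InjOn r L) {A B : Finset V} (hBL : B ⊆ L)
    (hAB : A ⊆ B) (hmem : argminR r B ∈ A) : argminR r A = argminR r B := by
  have hA : A.Nonempty := ⟨_, hmem⟩
  have h1 : argminR r A ∈ B := hAB (argminR_mem hA)
  have hB : B.Nonempty := ⟨_, h1⟩
  exact hinj (hBL h1) (hBL (argminR_mem hB))
    (le_antisymm (argminR_min hA hmem) (argminR_min hB h1))

lemma Aset_subset_L (v : V) : ∀ i, Aset adj L r v i ⊆ L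
  | 0 => Finset.inter_subset_right
  | i+1 => by
      rw [Aset]; split
      · exact (Finset.erase_subset _ _).trans Finset.inter_subset_right
      · exact Finset.empty_subset _

lemma Aset_subset_pred (v : V) : ∀ i, Aset adj L r v i ⊆ predSet adj v
  | 0 => Finset.inter_subset_left
  | i+1 => by
      rw [Aset]; split
      · exact (Finset.erase_subset _ _).trans
          (Finset.inter_subset_left.trans Finset.inter_subset_right)
      · exact Finset.empty_subset _

lemma labVertex_mem {v : V} {i : ℕ} (h : (Aset adj L r v i).Nonempty) :
    labVertex adj L r v i ∈ Aset adj L r v i := argminR_mem h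

lemma Aset_succ_subset_succSet (v : V) (i : ℕ) :
    Aset adj L r v (i+1) ⊆ succSet adj (labVertex adj L r v i) := by
  rw [Aset]; split
  · exact (Finset.erase_subset _ _).trans
      (Finset.inter_subset_left.trans Finset.inter_subset_left)
  · exact Finset.empty_subset _

lemma labVertex_notMem_succ (v : V) (i : ℕ) :
    labVertex adj L r v i ∉ Aset adj L r v (i+1) := by
  rw [Aset]; split
  · exact Finset.notMem_erase _ _
  · exact Finset.notMem_empty _

lemma Aset_nonempty_of_succ {v : V} {i : ℕ} (h : (Aset adj L r v (i+1)).Nonempty) :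
    (Aset adj L r v i).Nonempty := by
  by_contra hc
  rw [Aset, if_neg hc] at h
  exact Finset.not_nonempty_empty h

lemma Aset_antitone (hacyc : IsAcyclic adj) (v : V) :
    ∀ i, Aset adj L r v (i+1) ⊆ Aset adj L r v i := by
  intro i
  match i with
  | 0 =>
    intro w hw
    exact Finset.mem_inter.mpr ⟨Aset_subset_pred v _ hw, Aset_subset_L v _ hw⟩
  | i+1 =>
    intro w hw
    have hne2 : (Aset adj L r v (i+1)).Nonempty := Aset_nonempty_of_succ ⟨w, hw⟩
    rw [Aset, if_pos hne2] at hw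
    have hne1 : (Aset adj L r v i).Nonempty := Aset_nonempty_of_succ hne2
    rw [Aset, if_pos hne1]
    rcases Finset.mem_erase.mp hw with ⟨hwne, hw'⟩
    rcases Finset.mem_inter.mp hw' with ⟨hw'', hwL⟩
    rcases Finset.mem_inter.mp hw'' with ⟨hwS, hwP⟩
    -- ℓ_{i+1} := argminR r (Aset v (i+1)) is in Aset v (i+1) ⊆ succSet ℓ_i
    have hl1 : argminR r (Aset adj L r v (i+1)) ∈ Aset adj L r v (i+1) := argminR_mem hne2
    have hreach1 : reach adj (labVertex adj L r v i) (argminR r (Aset adj L r v (i+1))) :=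
      mem_succSet.mp (Aset_succ_subset_succSet v i hl1)
    have hreach2 : reach adj (argminR r (Aset adj L r v (i+1))) w := mem_succSet.mp hwS
    refine Finset.mem_erase.mpr ⟨?_, Finset.mem_inter.mpr ⟨Finset.mem_inter.mpr ⟨?_, hwP⟩, hwL⟩⟩
    · rintro rfl
      -- w = ℓ_i : then ℓ_{i+1} and ℓ_i reach each other, contradiction with erase
      have : argminR r (Aset adj L r v (i+1)) = labVertex adj L r v i :=
        reach_antisymm hacyc hreach2 hreach1
      exact labVertex_notMem_succ v i (this ▸ hl1)
    · exact mem_succSet.mpr (hreach1.trans hreach2)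

lemma Aset_card_bound (hacyc : IsAcyclic adj) (v : V) :
    ∀ i, (Aset adj L r v i).Nonempty → (Aset adj L r v i).card + i ≤ Fintype.card V := by
  intro i
  induction i with
  | zero => intro _; simpa using Finset.card_le_univ (Aset adj L r v 0)
  | succ i ih =>
    intro h
    have hi : (Aset adj L r v i).Nonempty := Aset_nonempty_of_succ h
    have hss : Aset adj L r v (i+1) ⊂ Aset adj L r v i :=
      ⟨Aset_antitone hacyc v i, fun hcon =>
        labVertex_notMem_succ v i (hcon (labVertex_mem hi))⟩
    have := Finset.card_lt_card hss
    have := ih hi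
    omega

lemma Aset_nonempty_mono (hacyc : IsAcyclic adj) {v : V} {i j : ℕ} (hij : i ≤ j)
    (h : (Aset adj L r v j).Nonempty) : (Aset adj L r v i).Nonempty := by
  induction j with
  | zero => obtain rfl := Nat.le_zero.mp hij; exact h
  | succ j ih =>
    rcases Nat.eq_or_lt_of_le hij with rfl | hlt
    · exact h
    · exact ih (by omega) (h.mono (Aset_antitone hacyc v j))

lemma Aset_nonempty_iff (hacyc : IsAcyclic adj) (v : V) {i : ℕ} :
    (Aset adj L r v i).Nonempty ↔ i < kOf adj L r v := by
  set T := (Finset.range (Fintype.card V + 1)).filter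
    (fun i => (Aset adj L r v i).Nonempty) with hT
  have hmemT : ∀ j, j ∈ T ↔ (Aset adj L r v j).Nonempty := by
    intro j
    simp only [hT, Finset.mem_filter, Finset.mem_range]
    constructor
    · exact fun h => h.2
    · intro h
      have hb := Aset_card_bound hacyc v j h
      have : 1 ≤ (Aset adj L r v j).card := Finset.card_pos.mpr h
      exact ⟨by omega, h⟩
  constructor
  · intro h
    have hsub : Finset.range (i+1) ⊆ T := by
      intro j hj
      rw [hmemT]
      exact Aset_nonempty_mono hacyc (by
        have := Finset.mem_range.mp hj; omega) h
    have := Finset.card_le_card hsub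
    simpa [kOf, ← hT] using this
  · intro h
    by_contra hc
    have hsub : T ⊆ Finset.range i := by
      intro j hj
      rw [Finset.mem_range]
      by_contra hji
      exact hc (Aset_nonempty_mono hacyc (by omega) ((hmemT j).mp hj))
    have := Finset.card_le_card hsub
    simp only [Finset.card_range] at this
    rw [kOf, ← hT] at h
    omega


lemma labVertex_chain (hacyc : IsAcyclic adj) (v : V) :
    ∀ {i j : ℕ}, i ≤ j → j < kOf adj L r v →
      reach adj (labVertex adj L r v i) (labVertex adj L r v j) := by
  intro i j
  induction j with
  | zero => intro hij _; obtain rfl := Nat.le_zero.mp hij; exact Relation.ReflTransGen.refl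
  | succ j ih =>
    intro hij hj
    rcases Nat.eq_or_lt_of_le hij with rfl | hlt
    · exact Relation.ReflTransGen.refl
    · have h1 : reach adj (labVertex adj L r v i) (labVertex adj L r v j) :=
        ih (by omega) (by omega)
      have hne : (Aset adj L r v (j+1)).Nonempty := (Aset_nonempty_iff hacyc v).mpr hj
      have h2 : reach adj (labVertex adj L r v j) (labVertex adj L r v (j+1)) :=
        mem_succSet.mp (Aset_succ_subset_succSet v j (labVertex_mem hne))
      exact h1.trans h2

lemma Aset_transfer (hacyc : IsAcyclic adj) (hinj : Set.InjOn r L) {v u : V}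
    (hk : 0 < kOf adj L r v)
    (hvt : reach adj (labVertex adj L r v (kOf adj L r v - 1)) u)
    (huv : reach adj u v) :
    ∀ i, (i ≤ kOf adj L r v → Aset adj L r u i ⊆ Aset adj L r v i) ∧
         (i < kOf adj L r v → labVertex adj L r v i ∈ Aset adj L r u i) := by
  set k := kOf adj L r v with hkdef
  -- any labVertex v i with i < k reaches u
  have hreach_u : ∀ i, i < k → reach adj (labVertex adj L r v i) u := fun i hi =>
    (labVertex_chain hacyc v (by omega) (by omega : k - 1 < k)).trans hvt
  intro i
  induction i with
  | zero =>
    constructor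
    · intro _ w hw
      rcases Finset.mem_inter.mp hw with ⟨hwP, hwL⟩
      exact Finset.mem_inter.mpr
        ⟨mem_predSet.mpr ((mem_predSet.mp hwP).trans huv), hwL⟩
    · intro h0
      have hne : (Aset adj L r v 0).Nonempty := (Aset_nonempty_iff hacyc v).mpr h0
      have hmem := labVertex_mem hne
      rcases Finset.mem_inter.mp hmem with ⟨_, hL0⟩
      exact Finset.mem_inter.mpr
        ⟨mem_predSet.mpr (hreach_u 0 h0), hL0⟩
  | succ i ih =>
    have hlab_eq : i < k → labVertex adj L r u i = labVertex adj L r v i := fun hi =>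
      argminR_eq_of_subset hinj (Aset_subset_L v i) (ih.1 (by omega)) (ih.2 hi)
    constructor
    · intro hik
      have hi : i < k := by omega
      have hneu : (Aset adj L r u i).Nonempty := ⟨_, ih.2 hi⟩
      have hnev : (Aset adj L r v i).Nonempty := (Aset_nonempty_iff hacyc v).mpr hi
      intro w hw
      rw [Aset, if_pos hneu] at hw
      rw [Aset, if_pos hnev]
      rw [show argminR r (Aset adj L r u i) = labVertex adj L r u i from rfl,
        hlab_eq hi] at hw
      rcases Finset.mem_erase.mp hw with ⟨hwne, hw'⟩
      rcases Finset.mem_inter.mp hw' with ⟨hw'', hwL⟩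
      rcases Finset.mem_inter.mp hw'' with ⟨hwS, hwP⟩
      exact Finset.mem_erase.mpr ⟨hwne, Finset.mem_inter.mpr
        ⟨Finset.mem_inter.mpr ⟨hwS,
          mem_predSet.mpr ((mem_predSet.mp hwP).trans huv)⟩, hwL⟩⟩
    · intro hik
      have hi : i < k := by omega
      have hneu : (Aset adj L r u i).Nonempty := ⟨_, ih.2 hi⟩
      have hnev1 : (Aset adj L r v (i+1)).Nonempty := (Aset_nonempty_iff hacyc v).mpr hik
      have hmem := labVertex_mem hnev1
      have hmem' := hmem
      rw [Aset, if_pos ((Aset_nonempty_iff hacyc v).mpr hi)] at hmem'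
      rcases Finset.mem_erase.mp hmem' with ⟨hwne, hw'⟩
      rcases Finset.mem_inter.mp hw' with ⟨hw'', hwL⟩
      rcases Finset.mem_inter.mp hw'' with ⟨hwS, _⟩
      rw [Aset, if_pos hneu,
        show argminR r (Aset adj L r u i) = labVertex adj L r u i from rfl, hlab_eq hi]
      exact Finset.mem_erase.mpr ⟨hwne, Finset.mem_inter.mpr
        ⟨Finset.mem_inter.mpr ⟨hwS,
          mem_predSet.mpr (hreach_u (i+1) hik)⟩, hwL⟩⟩


lemma label_transfer (hacyc : IsAcyclic adj) (hinj : Set.InjOn r L) {v u : V}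
    (hk : 0 < kOf adj L r v)
    (hvt : reach adj (labVertex adj L r v (kOf adj L r v - 1)) u)
    (huv : reach adj u v) :
    kOf adj L r u = kOf adj L r v ∧ labelSeq adj L r u = labelSeq adj L r v := by
  set k := kOf adj L r v with hkdef
  have htr := Aset_transfer hacyc hinj hk hvt huv
  have hlab_eq : ∀ i, i < k → labVertex adj L r u i = labVertex adj L r v i := fun i hi =>
    argminR_eq_of_subset hinj (Aset_subset_L v i) ((htr i).1 (by omega)) ((htr i).2 hi)
  have hku : kOf adj L r u = k := by
    have hle : kOf adj L r u ≤ k := by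
      by_contra hc
      have h1 : (Aset adj L r u k).Nonempty := (Aset_nonempty_iff hacyc u).mpr (by omega)
      have h2 : (Aset adj L r v k).Nonempty := h1.mono ((htr k).1 le_rfl)
      have := (Aset_nonempty_iff hacyc v).mp h2
      omega
    have hge : k ≤ kOf adj L r u := by
      have h1 : (Aset adj L r u (k-1)).Nonempty := ⟨_, (htr (k-1)).2 (by omega)⟩
      have := (Aset_nonempty_iff hacyc u).mp h1
      omega
    omega
  refine ⟨hku, ?_⟩
  unfold labelSeq
  rw [hku, ← hkdef]
  exact List.map_congr_left fun i hi => hlab_eq i (List.mem_range.mp hi)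

end Aux

/-- with `v_t` the last entry of `ℓ(v)`, every vertex of
`D(v_t, v) \ {v_t} = (S(v_t) ∩ P(v)) \ {v_t}` is unranked, and `D(v_t, v)` is exactly
the set of vertices `u` that reach `v` and have `ℓ(u) = ℓ(v)`, together with `v_t`. -/
theorem same_label_predecessors [Fintype V] [Nonempty V]
    (adj : V → V → Prop) (hacyc : IsAcyclic adj)
    (L : Finset V) (r : V → ℕ∞)
    (hfin : ∀ w ∈ L, r w ≠ ⊤) (hpos : ∀ w ∈ L, 0 < r w)
    (hinf : ∀ w ∉ L, r w = ⊤) (hinj : Set.InjOn r L)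
    (v : V) (hk : 0 < kOf adj L r v) :
    (∀ u ∈ (succSet adj (labVertex adj L r v (kOf adj L r v - 1)) ∩ predSet adj v).erase
        (labVertex adj L r v (kOf adj L r v - 1)), u ∉ L) ∧
    (∀ u : V,
      u ∈ succSet adj (labVertex adj L r v (kOf adj L r v - 1)) ∩ predSet adj v ↔
        ((reach adj u v ∧ labelSeq adj L r u = labelSeq adj L r v) ∨
          u = labVertex adj L r v (kOf adj L r v - 1))) := by
  classical
  set k := kOf adj L r v with hkdef
  set vt := labVertex adj L r v (k - 1) with hvtdef
  have hk1 : k - 1 < k := by omega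
  have hne : (Aset adj L r v (k-1)).Nonempty := (Aset_nonempty_iff hacyc v).mpr hk1
  have hAk : Aset adj L r v ((k-1)+1) = ∅ :=
    Finset.not_nonempty_iff_eq_empty.mp (fun h => by
      have := (Aset_nonempty_iff hacyc v).mp h; omega)
  have hAk' : (succSet adj vt ∩ predSet adj v ∩ L).erase vt = ∅ := by
    rw [Aset, if_pos hne] at hAk; exact hAk
  have part1 : ∀ u ∈ (succSet adj vt ∩ predSet adj v).erase vt, u ∉ L := by
    intro u hu huL
    rcases Finset.mem_erase.mp hu with ⟨hune, hu'⟩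
    have hmem : u ∈ (succSet adj vt ∩ predSet adj v ∩ L).erase vt := by
      rcases Finset.mem_inter.mp hu' with ⟨h1, h2⟩
      exact Finset.mem_erase.mpr ⟨hune, Finset.mem_inter.mpr
        ⟨Finset.mem_inter.mpr ⟨h1, h2⟩, huL⟩⟩
    rw [hAk'] at hmem
    exact absurd hmem (Finset.notMem_empty u)
  refine ⟨part1, fun u => ⟨?_, ?_⟩⟩
  · intro hu
    rcases Finset.mem_inter.mp hu with ⟨huS, huP⟩
    left
    exact ⟨mem_predSet.mp huP,
      (label_transfer hacyc hinj hk (mem_succSet.mp huS) (mem_predSet.mp huP)).2⟩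
  · rintro (⟨huv, hlab⟩ | rfl)
    · -- u has the same label sequence as v
      have hku : kOf adj L r u = k := by
        have hlen := congrArg List.length hlab
        simpa [labelSeq] using hlen
      have hentry : labVertex adj L r u (k-1) = vt := by
        have hget := congrArg (fun l : List V => l[k-1]?) hlab
        simp only [labelSeq, hku, ← hkdef, List.getElem?_map, List.getElem?_range,
          hk1] at hget
        simpa using hget
      have hneu : (Aset adj L r u (k-1)).Nonempty :=
        (Aset_nonempty_iff hacyc u).mpr (by omega)
      have hvtmem : vt ∈ Aset adj L r u (k-1) := hentry ▸ labVertex_mem hneu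
      have hvtP : vt ∈ predSet adj u := Aset_subset_pred u (k-1) hvtmem
      exact Finset.mem_inter.mpr
        ⟨mem_succSet.mpr (mem_predSet.mp hvtP), mem_predSet.mpr huv⟩
    · refine Finset.mem_inter.mpr ⟨mem_succSet.mpr Relation.ReflTransGen.refl, ?_⟩
      exact Aset_subset_pred v (k-1) (labVertex_mem hne)

end
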